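/- arXiv:2204.04808 — 3 statements merged into one kernel-verified Lean document; each statement's English description precedes it below -/
import Mathlib

section
/- Let H be a real-valued square-integrable random variable, let δ > 0, and let B be a random variable uniform on {−1, 1} independent of H. Define the δ-transformation H̃ = H·1{|H| ≥ δ} + (H + 2δB)·1{|H| < δ}. Then: (i) |H̃| ≥ δ almost surely; (ii) E[H̃] = E[H]; and (iii) Var[H̃] = Var[H] + 4δ²·P(|H| < δ), and in particular Var[H̃] ≤ Var[H] + 4δ². -/
open MeasureTheory ProbabilityTheory

/-- **The δ-transformation.**  Let `H` be a real-valued square-integrable random variable,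
`δ > 0`, and `B` a random variable uniform on `{-1, 1}` independent of `H`.  Define
`H̃ = H·1{|H| ≥ δ} + (H + 2δB)·1{|H| < δ}`.  Then `|H̃| ≥ δ` a.s., `E[H̃] = E[H]`,
`Var[H̃] = Var[H] + 4δ²·P(|H| < δ)`, and in particular `Var[H̃] ≤ Var[H] + 4δ²`. -/
theorem delta_transformation
    {Ω : Type*} [MeasurableSpace Ω] (μ : Measure Ω) [IsProbabilityMeasure μ]
    (H B : Ω → ℝ) (hH : MemLp H 2 μ) (hHmeas : Measurable H) (hBmeas : Measurable B)
    (hB1 : μ {ω | B ω = 1} = 1/2) (hBneg1 : μ {ω | B ω = -1} = 1/2)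
    (hindep : IndepFun B H μ)
    (δ : ℝ) (hδ : 0 < δ)
    (Htilde : Ω → ℝ)
    (hHtilde : Htilde = fun ω => if δ ≤ |H ω| then H ω else H ω + 2 * δ * B ω) :
    (∀ᵐ ω ∂μ, δ ≤ |Htilde ω|) ∧
    (∫ ω, Htilde ω ∂μ = ∫ ω, H ω ∂μ) ∧
    (variance Htilde μ = variance H μ + 4 * δ ^ 2 * (μ {ω | |H ω| < δ}).toReal) ∧
    (variance Htilde μ ≤ variance H μ + 4 * δ ^ 2) := by
  -- B = ±1 a.s.
  have hA1 : MeasurableSet {ω | B ω = 1} := hBmeas (measurableSet_singleton 1)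
  have hA2 : MeasurableSet {ω | B ω = -1} := hBmeas (measurableSet_singleton (-1))
  have hdisj : Disjoint {ω | B ω = 1} {ω | B ω = -1} := by
    rw [Set.disjoint_left]; intro ω h1 h2; simp only [Set.mem_setOf_eq] at h1 h2; norm_num [h1] at h2
  have hunion : μ ({ω | B ω = 1} ∪ {ω | B ω = -1}) = 1 := by
    rw [measure_union hdisj hA2, hB1, hBneg1, one_div]
    exact ENNReal.inv_two_add_inv_two
  have hBae : ∀ᵐ ω ∂μ, B ω = 1 ∨ B ω = -1 := by
    have := prob_compl_eq_zero_iff (μ := μ) (hA1.union hA2) |>.mpr hunion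
    rw [ae_iff]
    have hs : {a | ¬(B a = 1 ∨ B a = -1)} = ({ω | B ω = 1} ∪ {ω | B ω = -1})ᶜ := by
      ext ω; simp [not_or]
    rw [hs]; exact this
  -- the indicator function g
  set f : ℝ → ℝ := fun x => if δ ≤ |x| then 0 else 1 with hf
  have hfmeas : Measurable f := by
    apply Measurable.ite _ measurable_const measurable_const
    exact measurableSet_le measurable_const measurable_abs
  set g : Ω → ℝ := f ∘ H with hg
  have hgmeas : Measurable g := hfmeas.comp hHmeas
  have hsmeas : MeasurableSet {ω | |H ω| < δ} := measurableSet_lt hHmeas.abs measurable_const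
  have hgind : g = Set.indicator {ω | |H ω| < δ} (fun _ => (1:ℝ)) := by
    ext ω
    by_cases h : |H ω| < δ
    · simp [hg, hf, Set.indicator, h, not_le.mpr h]
    · simp [hg, hf, Set.indicator, h, not_lt.mp h]
  have hgint : Integrable g μ := by
    rw [hgind]; exact (integrable_const 1).indicator hsmeas
  have hgintegral : ∫ ω, g ω ∂μ = (μ {ω | |H ω| < δ}).toReal := by
    rw [hgind]
    simpa [measureReal_def, Pi.one_def] using integral_indicator_one (μ := μ) hsmeas
  -- Htilde = H + 2δ * (B * g)
  have hrep : Htilde = fun ω => H ω + 2 * δ * (B ω * g ω) := by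
    rw [hHtilde]; ext ω
    by_cases h : δ ≤ |H ω| <;> simp [hg, hf, h]
  -- part (i)
  have part1 : ∀ᵐ ω ∂μ, δ ≤ |Htilde ω| := by
    filter_upwards [hBae] with ω hω
    rw [hHtilde]
    by_cases h : δ ≤ |H ω|
    · simp only [if_pos h]; exact h
    · push_neg at h
      simp only [not_le.mpr h, if_false]
      cases' abs_lt.mp h with h1 h2
      rcases hω with hb | hb <;> rw [hb, le_abs]
      · left; nlinarith
      · right; nlinarith
  -- integrability and basic integrals
  have hBint : Integrable B μ := by
    refine (integrable_const (1:ℝ)).mono' hBmeas.aestronglyMeasurable ?_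
    filter_upwards [hBae] with ω hω
    rcases hω with hb | hb <;> simp [hb]
  have hBintegral : ∫ ω, B ω ∂μ = 0 := by
    have hae : B =ᵐ[μ] fun ω => Set.indicator {ω | B ω = 1} (fun _ => (1:ℝ)) ω
        - Set.indicator {ω | B ω = -1} (fun _ => (1:ℝ)) ω := by
      filter_upwards [hBae] with ω hω
      rcases hω with hb | hb <;>
        simp [Set.indicator, hb, show (1:ℝ) ≠ -1 by norm_num, show (-1:ℝ) ≠ 1 by norm_num]
    rw [integral_congr_ae hae, integral_sub ((integrable_const 1).indicator hA1)
      ((integrable_const 1).indicator hA2)]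
    have e1 := integral_indicator_one (μ := μ) hA1
    have e2 := integral_indicator_one (μ := μ) hA2
    simp only [Pi.one_def] at e1 e2
    rw [e1, e2, measureReal_def, measureReal_def, hB1, hBneg1, sub_self]
  have hBg : IndepFun B g μ := hindep.comp measurable_id hfmeas
  have hBgintegral : ∫ ω, B ω * g ω ∂μ = 0 := by
    rw [hBg.integral_fun_mul_eq_mul_integral hBmeas.aestronglyMeasurable hgmeas.aestronglyMeasurable,
      hBintegral, zero_mul]
  have hBgint : Integrable (fun ω => B ω * g ω) μ := hBg.integrable_mul hBint hgint
  have hKint : Integrable (fun ω => 2 * δ * (B ω * g ω)) μ := hBgint.const_mul _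
  have hHint : Integrable H μ := hH.integrable one_le_two
  -- part (ii)
  have part2 : ∫ ω, Htilde ω ∂μ = ∫ ω, H ω ∂μ := by
    rw [hrep, integral_add hHint hKint, integral_const_mul, hBgintegral, mul_zero, add_zero]
  -- MemLp of Htilde
  have hKmem : MemLp (fun ω => 2 * δ * (B ω * g ω)) 2 μ := by
    refine MemLp.of_bound ((hBmeas.mul hgmeas).const_mul _).aestronglyMeasurable (2 * δ) ?_
    filter_upwards [hBae] with ω hω
    have hg01 : g ω = 0 ∨ g ω = 1 := by
      by_cases h : δ ≤ |H ω| <;> simp [hg, hf, h]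
    rcases hω with hb | hb <;> rcases hg01 with hgg | hgg <;>
      simp [hb, hgg, abs_of_pos hδ, abs_mul] <;> positivity
  have hHtmem : MemLp Htilde 2 μ := by
    rw [hrep]; exact hH.add hKmem
  -- B² = 1 a.e., hence (B*g)² =ᵐ g
  have hBg2 : (fun ω => (B ω * g ω) ^ 2) =ᵐ[μ] g := by
    filter_upwards [hBae] with ω hω
    have hg01 : g ω = 0 ∨ g ω = 1 := by
      by_cases h : δ ≤ |H ω| <;> simp [hg, hf, h]
    rcases hω with hb | hb <;> rcases hg01 with hgg | hgg <;> simp [hb, hgg]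
  -- cross term
  have hcross : IndepFun B (fun ω => H ω * g ω) μ := by
    have : (fun ω => H ω * g ω) = (fun x => x * f x) ∘ H := rfl
    rw [this]
    exact hindep.comp measurable_id (measurable_id.mul hfmeas)
  have hcrossint : ∫ ω, B ω * (H ω * g ω) ∂μ = 0 := by
    rw [hcross.integral_fun_mul_eq_mul_integral hBmeas.aestronglyMeasurable
      (hHmeas.mul hgmeas).aestronglyMeasurable, hBintegral, zero_mul]
  have hcrossintble : Integrable (fun ω => B ω * (H ω * g ω)) μ := by
    refine hHint.abs.mono' ((hBmeas.mul (hHmeas.mul hgmeas))).aestronglyMeasurable ?_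
    filter_upwards [hBae] with ω hω
    have hg01 : g ω = 0 ∨ g ω = 1 := by
      by_cases h : δ ≤ |H ω| <;> simp [hg, hf, h]
    rcases hω with hb | hb <;> rcases hg01 with hgg | hgg <;>
      simp [hb, hgg, Real.norm_eq_abs, abs_nonneg, abs_neg]
  have hBg2int : Integrable (fun ω => (B ω * g ω) ^ 2) μ := (integrable_congr hBg2).mpr hgint
  -- expand Htilde²
  have hH2 : Integrable (fun ω => H ω ^ 2) μ := by
    have := hH.integrable_sq
    simpa [sq] using this
  have hsq : (fun ω => Htilde ω ^ 2)
      = fun ω => H ω ^ 2 + (4 * δ * (B ω * (H ω * g ω)) + 4 * δ ^ 2 * (B ω * g ω) ^ 2) := by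
    rw [hrep]; ext ω; ring
  have hc1 : Integrable (fun ω => 4 * δ * (B ω * (H ω * g ω))) μ := hcrossintble.const_mul _
  have hc2 : Integrable (fun ω => 4 * δ ^ 2 * (B ω * g ω) ^ 2) μ := hBg2int.const_mul _
  have hc12 : Integrable (fun ω => 4 * δ * (B ω * (H ω * g ω))
      + 4 * δ ^ 2 * (B ω * g ω) ^ 2) μ := hc1.add hc2
  have hintsq : ∫ ω, Htilde ω ^ 2 ∂μ
      = ∫ ω, H ω ^ 2 ∂μ + 4 * δ ^ 2 * (μ {ω | |H ω| < δ}).toReal := by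
    rw [hsq, integral_add hH2 hc12, integral_add hc1 hc2,
      integral_const_mul, integral_const_mul, hcrossint, mul_zero, zero_add,
      integral_congr_ae hBg2, hgintegral]
  -- part (iii)
  have hp : (μ {ω | |H ω| < δ}).toReal ≤ 1 := by
    have := prob_le_one (μ := μ) (s := {ω | |H ω| < δ})
    exact ENNReal.toReal_le_of_le_ofReal one_pos.le (by simpa using this)
  have part3 : variance Htilde μ = variance H μ + 4 * δ ^ 2 * (μ {ω | |H ω| < δ}).toReal := by
    rw [variance_eq_sub hHtmem, variance_eq_sub hH]
    simp only [Pi.pow_apply]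
    rw [hintsq, part2]
    ring
  refine ⟨part1, part2, part3, ?_⟩
  rw [part3]
  have : 4 * δ ^ 2 * (μ {ω | |H ω| < δ}).toReal ≤ 4 * δ ^ 2 * 1 := by
    apply mul_le_mul_of_nonneg_left hp (by positivity)
  linarith
end

section
/- For every real p ≥ 2 there exists a constant C_p > 0, depending only on p, such that for every n ≥ 1 and every i.i.d. sequence X_1, …, X_n of real random variables with E[X_1] = 0 and E[|X_1|^p] < ∞, one has E[ |(1/n) Σ_{i=1}^n X_i|^p ] ≤ C_p · E[|X_1|^p] / n^{p/2}. -/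
open MeasureTheory ProbabilityTheory
open scoped BigOperators

open scoped ENNReal NNReal

section aux

lemma MZ.cont_abs_rpow {c : ℝ} (hc : 0 ≤ c) : Continuous (fun x : ℝ => |x| ^ c) := by
  rw [continuous_iff_continuousAt]
  intro x
  exact (Real.continuousAt_rpow_const |x| c (Or.inr hc)).comp continuous_abs.continuousAt

lemma MZ.rpow_le_one_add_rpow {x q r : ℝ} (hx : 0 ≤ x) (hq : 0 ≤ q) (hqr : q ≤ r) :
    x ^ q ≤ 1 + x ^ r := by
  rcases le_total x 1 with h | h
  · have h1 := Real.rpow_le_one hx h hq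
    have h2 := Real.rpow_nonneg hx r
    linarith
  · have h1 := Real.rpow_le_rpow_of_exponent_le h hqr
    linarith

lemma MZ.rpow_sub_two_mul_self {p t : ℝ} (hp : 2 ≤ p) (ht : 0 ≤ t) :
    t ^ (p - 2) * t = t ^ (p - 1) := by
  have h : p - 1 = (p - 2) + 1 := by ring
  rw [h, Real.rpow_add' ht (by linarith), Real.rpow_one]

lemma MZ.phi_eq {p x : ℝ} (hp : 2 ≤ p) (hx : 0 ≤ x) : |x| ^ (p - 2) * x = x ^ (p - 1) := by
  rw [abs_of_nonneg hx, MZ.rpow_sub_two_mul_self hp hx]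

/-- key one-sided bound for nonnegative arguments via MVT -/
lemma MZ.rpow_sub_rpow_le {p v u : ℝ} (hp : 2 ≤ p) (h0 : 0 ≤ v) (hvu : v ≤ u) :
    u ^ (p - 1) - v ^ (p - 1) ≤ (p - 1) * u ^ (p - 2) * (u - v) := by
  rcases eq_or_lt_of_le hvu with rfl | hlt
  · simp
  have hu0 : 0 < u := lt_of_le_of_lt h0 hlt
  have hcont : ContinuousOn (fun x : ℝ => x ^ (p - 1)) (Set.Icc v u) := by
    intro x _
    exact (Real.continuousAt_rpow_const x (p - 1) (Or.inr (by linarith))).continuousWithinAt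
  have hderiv : ∀ x ∈ Set.Ioo v u,
      HasDerivAt (fun x : ℝ => x ^ (p - 1)) ((p - 1) * x ^ (p - 1 - 1)) x := by
    intro x hx
    exact Real.hasDerivAt_rpow_const (Or.inr (by linarith))
  obtain ⟨c, hc, hceq⟩ := exists_hasDerivAt_eq_slope (fun x : ℝ => x ^ (p - 1))
    (fun x => (p - 1) * x ^ (p - 1 - 1)) hlt hcont hderiv
  have hc0 : 0 ≤ c := le_trans h0 hc.1.le
  have hcu : c ≤ u := hc.2.le
  have hcb : c ^ (p - 1 - 1) ≤ u ^ (p - 2) := by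
    have : p - 1 - 1 = p - 2 := by ring
    rw [this]
    exact Real.rpow_le_rpow hc0 hcu (by linarith)
  have huv : 0 < u - v := by linarith
  rw [eq_div_iff (ne_of_gt huv)] at hceq
  rw [← hceq]
  have hp1 : (0:ℝ) ≤ p - 1 := by linarith
  exact mul_le_mul_of_nonneg_right (mul_le_mul_of_nonneg_left hcb hp1) huv.le

lemma MZ.phi_mono {p : ℝ} (hp : 2 ≤ p) {v u : ℝ} (hvu : v ≤ u) :
    |v| ^ (p - 2) * v ≤ |u| ^ (p - 2) * u := by
  rcases le_or_gt 0 v with hv | hv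
  · rw [MZ.phi_eq hp hv, MZ.phi_eq hp (le_trans hv hvu)]
    exact Real.rpow_le_rpow hv hvu (by linarith)
  · have hv' : |v| ^ (p - 2) * v ≤ 0 :=
      mul_nonpos_of_nonneg_of_nonpos (Real.rpow_nonneg (abs_nonneg v) _) hv.le
    rcases le_or_gt 0 u with hu | hu
    · exact le_trans hv' (mul_nonneg (Real.rpow_nonneg (abs_nonneg u) _) hu)
    · have h1 : |u| ^ (p - 2) * u = -((-u) ^ (p - 1)) := by
        rw [abs_of_neg hu, ← MZ.rpow_sub_two_mul_self hp (by linarith : (0:ℝ) ≤ -u)]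
        ring
      have h2 : |v| ^ (p - 2) * v = -((-v) ^ (p - 1)) := by
        rw [abs_of_neg hv, ← MZ.rpow_sub_two_mul_self hp (by linarith : (0:ℝ) ≤ -v)]
        ring
      rw [h1, h2, neg_le_neg_iff]
      exact Real.rpow_le_rpow (by linarith) (by linarith) (by linarith)

lemma MZ.phi_sub_le {p : ℝ} (hp : 2 ≤ p) {v u : ℝ} (hvu : v ≤ u) :
    |u| ^ (p - 2) * u - |v| ^ (p - 2) * v ≤ (p - 1) * (|u| + |v|) ^ (p - 2) * (u - v) := by
  have hp2 : (0:ℝ) ≤ p - 2 := by linarith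
  have hp1 : (1:ℝ) ≤ p - 1 := by linarith
  rcases le_or_gt 0 v with hv | hv
  · have hu : 0 ≤ u := le_trans hv hvu
    rw [MZ.phi_eq hp hv, MZ.phi_eq hp hu]
    refine le_trans (MZ.rpow_sub_rpow_le hp hv hvu) ?_
    have h1 : u ^ (p - 2) ≤ (|u| + |v|) ^ (p - 2) := by
      apply Real.rpow_le_rpow hu _ hp2
      rw [abs_of_nonneg hu, abs_of_nonneg hv]; linarith
    exact mul_le_mul_of_nonneg_right (mul_le_mul_of_nonneg_left h1 (by linarith))
      (sub_nonneg.mpr hvu)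
  · rcases le_or_gt u 0 with hu | hu
    · -- both ≤ 0
      have h1 : |u| ^ (p - 2) * u = -((-u) ^ (p - 1)) := by
        rw [abs_of_nonpos hu, ← MZ.rpow_sub_two_mul_self hp (by linarith : (0:ℝ) ≤ -u)]
        ring
      have h2 : |v| ^ (p - 2) * v = -((-v) ^ (p - 1)) := by
        rw [abs_of_neg hv, ← MZ.rpow_sub_two_mul_self hp (by linarith : (0:ℝ) ≤ -v)]
        ring
      rw [h1, h2]
      have h3 : (-v) ^ (p - 1) - (-u) ^ (p - 1) ≤ (p - 1) * (-v) ^ (p - 2) * ((-v) - (-u)) :=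
        MZ.rpow_sub_rpow_le hp (by linarith) (by linarith)
      have h4 : (-v) ^ (p - 2) ≤ (|u| + |v|) ^ (p - 2) := by
        apply Real.rpow_le_rpow (by linarith) _ hp2
        rw [abs_of_nonpos hu, abs_of_neg hv]; linarith
      have h5 : (p - 1) * (-v) ^ (p - 2) * (u - v) ≤ (p - 1) * (|u| + |v|) ^ (p - 2) * (u - v) :=
        mul_le_mul_of_nonneg_right (mul_le_mul_of_nonneg_left h4 (by linarith))
          (sub_nonneg.mpr hvu)
      have h6 : -v - -u = u - v := by ring
      rw [h6] at h3
      linarith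
    · -- v < 0 < u
      have habs : |u| + |v| = u - v := by
        rw [abs_of_pos hu, abs_of_neg hv]; ring
      rw [MZ.phi_eq hp hu.le]
      have h2 : |v| ^ (p - 2) * v = -((-v) ^ (p - 1)) := by
        rw [abs_of_neg hv, ← MZ.rpow_sub_two_mul_self hp (by linarith : (0:ℝ) ≤ -v)]
        ring
      rw [h2, habs, sub_neg_eq_add]
      have hb1 : u ^ (p - 1) ≤ (u - v) ^ (p - 2) * u := by
        rw [← MZ.rpow_sub_two_mul_self hp hu.le]
        have := Real.rpow_le_rpow hu.le (by linarith : u ≤ u - v) hp2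
        nlinarith
      have hb2 : (-v) ^ (p - 1) ≤ (u - v) ^ (p - 2) * (-v) := by
        rw [← MZ.rpow_sub_two_mul_self hp (by linarith : (0:ℝ) ≤ -v)]
        have := Real.rpow_le_rpow (by linarith : (0:ℝ) ≤ -v) (by linarith : -v ≤ u - v) hp2
        nlinarith
      have huv : (0:ℝ) ≤ (u - v) ^ (p - 2) := Real.rpow_nonneg (by linarith) _
      have h7 : (0:ℝ) ≤ (u - v) ^ (p - 2) * (u - v) := mul_nonneg huv (by linarith)
      nlinarith [h7]

lemma MZ.phi_abs_sub_le {p : ℝ} (hp : 2 ≤ p) (u v : ℝ) :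
    |(|u| ^ (p - 2) * u) - (|v| ^ (p - 2) * v)| ≤ (p - 1) * (|u| + |v|) ^ (p - 2) * |u - v| := by
  rcases le_total v u with h | h
  · rw [abs_of_nonneg (sub_nonneg.mpr (MZ.phi_mono hp h)), abs_of_nonneg (sub_nonneg.mpr h)]
    exact MZ.phi_sub_le hp h
  · rw [abs_sub_comm, abs_of_nonneg (sub_nonneg.mpr (MZ.phi_mono hp h)),
      abs_sub_comm, abs_of_nonneg (sub_nonneg.mpr h), add_comm |u| |v|]
    exact MZ.phi_sub_le hp h

lemma MZ.add_rpow_le {x y r : ℝ} (hx : 0 ≤ x) (hy : 0 ≤ y) (hr : 0 ≤ r) :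
    (x + y) ^ r ≤ 2 ^ r * (x ^ r + y ^ r) := by
  rcases le_total x y with h | h
  · calc (x + y) ^ r ≤ (2 * y) ^ r := Real.rpow_le_rpow (by linarith) (by linarith) hr
      _ = 2 ^ r * y ^ r := Real.mul_rpow (by norm_num) hy
      _ ≤ 2 ^ r * (x ^ r + y ^ r) := by
          have := Real.rpow_nonneg hx r
          have h2 : (0:ℝ) ≤ 2 ^ r := Real.rpow_nonneg (by norm_num) r
          nlinarith
  · calc (x + y) ^ r ≤ (2 * x) ^ r := Real.rpow_le_rpow (by linarith) (by linarith) hr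
      _ = 2 ^ r * x ^ r := Real.mul_rpow (by norm_num) hx
      _ ≤ 2 ^ r * (x ^ r + y ^ r) := by
          have := Real.rpow_nonneg hy r
          have h2 : (0:ℝ) ≤ 2 ^ r := Real.rpow_nonneg (by norm_num) r
          nlinarith

end aux

section lemA

lemma MZ.lemA {p : ℝ} (hp : 2 ≤ p) (a b : ℝ) :
    |a + b| ^ p ≤ |a| ^ p + p * (|a| ^ (p - 2) * a) * b
      + p * (p - 1) * 4 ^ (p - 2) * (|a| ^ (p - 2) * |b| ^ (2:ℝ) + |b| ^ p) := by
  have hp1 : (1:ℝ) < p := lt_of_lt_of_le one_lt_two hp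
  have hp2 : (0:ℝ) ≤ p - 2 := by linarith
  set g : ℝ → ℝ := fun t => |a + t * b| ^ p with hg
  set g' : ℝ → ℝ := fun t => p * |a + t * b| ^ (p - 2) * (a + t * b) * b with hg'
  have hder : ∀ t : ℝ, HasDerivAt g (g' t) t := by
    intro t
    have h1 : HasDerivAt (fun t : ℝ => a + t * b) b t := by
      simpa using ((hasDerivAt_id t).mul_const b).const_add a
    have h2 := (hasDerivAt_abs_rpow (a + t * b) hp1).comp t h1
    exact h2
  have hcont : ContinuousOn g (Set.Icc 0 1) :=
    fun t _ => (hder t).continuousAt.continuousWithinAt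
  obtain ⟨c, hc, hceq⟩ := exists_hasDerivAt_eq_slope g g' zero_lt_one hcont
    (fun x _ => hder x)
  have hkey : |a + b| ^ p = |a| ^ p + g' c := by
    have h0 : g 0 = |a| ^ p := by simp [hg]
    have h1 : g 1 = |a + b| ^ p := by simp [hg]
    have hceq' : g' c = g 1 - g 0 := by simpa using hceq
    rw [← h1, ← h0]
    linarith [hceq']
  have hc0 : 0 ≤ c := hc.1.le
  have hc1 : c ≤ 1 := hc.2.le
  -- decompose g' c
  have hdecomp : g' c = p * (|a| ^ (p - 2) * a) * b
      + p * ((|a + c * b| ^ (p - 2) * (a + c * b)) - (|a| ^ (p - 2) * a)) * b := by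
    simp [hg']; ring
  -- bound the error term
  have herr : p * ((|a + c * b| ^ (p - 2) * (a + c * b)) - (|a| ^ (p - 2) * a)) * b
      ≤ p * (p - 1) * 4 ^ (p - 2) * (|a| ^ (p - 2) * |b| ^ (2:ℝ) + |b| ^ p) := by
    have h1 : |((|a + c * b| ^ (p - 2) * (a + c * b)) - (|a| ^ (p - 2) * a))|
        ≤ (p - 1) * (|a + c * b| + |a|) ^ (p - 2) * |c * b| := by
      have := MZ.phi_abs_sub_le hp (a + c * b) a
      simpa using this
    have h2 : |a + c * b| + |a| ≤ 2 * (|a| + |b|) := by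
      have := abs_add_le a (c * b)
      have hcb : |c * b| ≤ |b| := by
        rw [abs_mul, abs_of_nonneg hc0]
        nlinarith [abs_nonneg b]
      linarith [abs_nonneg b]
    have h3 : (|a + c * b| + |a|) ^ (p - 2) ≤ (2 * (|a| + |b|)) ^ (p - 2) :=
      Real.rpow_le_rpow (by positivity) h2 hp2
    have h4 : (2 * (|a| + |b|)) ^ (p - 2) = 2 ^ (p - 2) * (|a| + |b|) ^ (p - 2) :=
      Real.mul_rpow (by norm_num) (by positivity)
    have h5 : (|a| + |b|) ^ (p - 2) ≤ 2 ^ (p - 2) * (|a| ^ (p - 2) + |b| ^ (p - 2)) :=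
      MZ.add_rpow_le (abs_nonneg a) (abs_nonneg b) hp2
    have hcb' : |c * b| ≤ |b| := by
      rw [abs_mul, abs_of_nonneg hc0]
      nlinarith [abs_nonneg b]
    -- chain
    have hphi : |((|a + c * b| ^ (p - 2) * (a + c * b)) - (|a| ^ (p - 2) * a))|
        ≤ (p - 1) * (2 ^ (p - 2) * (2 ^ (p - 2) * (|a| ^ (p - 2) + |b| ^ (p - 2)))) * |b| := by
      refine le_trans h1 ?_
      have hpn : (0:ℝ) ≤ p - 1 := by linarith
      have e1 : (|a + c * b| + |a|) ^ (p - 2)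
          ≤ 2 ^ (p - 2) * (2 ^ (p - 2) * (|a| ^ (p - 2) + |b| ^ (p - 2))) := by
        refine le_trans h3 ?_
        rw [h4]
        exact mul_le_mul_of_nonneg_left h5 (Real.rpow_nonneg (by norm_num) _)
      have hb0 : (0:ℝ) ≤ |b| := abs_nonneg b
      calc (p - 1) * (|a + c * b| + |a|) ^ (p - 2) * |c * b|
          ≤ (p - 1) * (|a + c * b| + |a|) ^ (p - 2) * |b| := by
            exact mul_le_mul_of_nonneg_left hcb' (by positivity)
        _ ≤ (p - 1) * (2 ^ (p - 2) * (2 ^ (p - 2) * (|a| ^ (p - 2) + |b| ^ (p - 2)))) * |b| :=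
            mul_le_mul_of_nonneg_right (mul_le_mul_of_nonneg_left e1 hpn) hb0
    have hfinal : p * ((|a + c * b| ^ (p - 2) * (a + c * b)) - (|a| ^ (p - 2) * a)) * b
        ≤ p * ((p - 1) * (2 ^ (p - 2) * (2 ^ (p - 2) * (|a| ^ (p - 2) + |b| ^ (p - 2)))) * |b|)
          * |b| := by
      have hple : p * ((|a + c * b| ^ (p - 2) * (a + c * b)) - (|a| ^ (p - 2) * a)) * b
          ≤ p * |((|a + c * b| ^ (p - 2) * (a + c * b)) - (|a| ^ (p - 2) * a))| * |b| := by
        have hpnn : (0:ℝ) ≤ p := by linarith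
        have := abs_mul ((|a + c * b| ^ (p - 2) * (a + c * b)) - (|a| ^ (p - 2) * a)) b
        nlinarith [le_abs_self (((|a + c * b| ^ (p - 2) * (a + c * b)) - (|a| ^ (p - 2) * a)) * b),
          abs_nonneg (((|a + c * b| ^ (p - 2) * (a + c * b)) - (|a| ^ (p - 2) * a)) * b)]
      refine le_trans hple ?_
      have hpnn : (0:ℝ) ≤ p := by linarith
      exact mul_le_mul_of_nonneg_right (mul_le_mul_of_nonneg_left hphi hpnn) (abs_nonneg b)
    refine le_trans hfinal (le_of_eq ?_)
    have e2 : |b| * |b| = |b| ^ (2:ℝ) := by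
      rw [show (2:ℝ) = ((2:ℕ):ℝ) by norm_num, Real.rpow_natCast]
      ring
    have e3 : |b| ^ (p - 2) * (|b| * |b|) = |b| ^ p := by
      rw [e2, ← Real.rpow_add' (abs_nonneg b) (by linarith : p - 2 + 2 ≠ 0)]
      norm_num
    have e4 : (4:ℝ) ^ (p - 2) = 2 ^ (p - 2) * 2 ^ (p - 2) := by
      rw [← Real.mul_rpow (by norm_num) (by norm_num)]
      norm_num
    rw [e4]
    linear_combination (p * (p - 1) * (2 ^ (p - 2) * 2 ^ (p - 2)) * |a| ^ (p - 2)) * e2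
      + (p * (p - 1) * (2 ^ (p - 2) * 2 ^ (p - 2))) * e3
  rw [hkey, hdecomp]
  linarith [herr]

end lemA

section lyap

lemma MZ.lyap {Ω : Type} [MeasurableSpace Ω] {μ : Measure Ω} [IsProbabilityMeasure μ]
    {f : Ω → ℝ} {p q : ℝ} (hq : 0 ≤ q) (hqp : q ≤ p) (hp : 0 < p)
    (hf : MemLp f (ENNReal.ofReal p) μ) :
    ∫ ω, |f ω| ^ q ∂μ ≤ (∫ ω, |f ω| ^ p ∂μ) ^ (q / p) := by
  rcases eq_or_lt_of_le hq with hq0 | hq0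
  · simp [← hq0, Real.rpow_zero]
  have hp0 : (ENNReal.ofReal p) ≠ 0 := by
    simp [ENNReal.ofReal_eq_zero, not_le, hp]
  have hq0' : (ENNReal.ofReal q) ≠ 0 := by
    simp [ENNReal.ofReal_eq_zero, not_le, hq0]
  have hfq : MemLp f (ENNReal.ofReal q) μ :=
    hf.mono_exponent (ENNReal.ofReal_le_ofReal hqp)
  have h1 := hfq.eLpNorm_eq_integral_rpow_norm hq0' ENNReal.ofReal_ne_top
  have h2 := hf.eLpNorm_eq_integral_rpow_norm hp0 ENNReal.ofReal_ne_top
  have hmono := eLpNorm_le_eLpNorm_of_exponent_le (μ := μ)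
    (ENNReal.ofReal_le_ofReal hqp) hf.aestronglyMeasurable
  rw [h1, h2] at hmono
  have htq : (ENNReal.ofReal q).toReal = q := ENNReal.toReal_ofReal hq
  have htp : (ENNReal.ofReal p).toReal = p := ENNReal.toReal_ofReal hp.le
  rw [htq, htp] at hmono
  have hIq : (0:ℝ) ≤ ∫ ω, ‖f ω‖ ^ q ∂μ :=
    integral_nonneg (fun ω => Real.rpow_nonneg (norm_nonneg _) _)
  have hIp : (0:ℝ) ≤ ∫ ω, ‖f ω‖ ^ p ∂μ :=
    integral_nonneg (fun ω => Real.rpow_nonneg (norm_nonneg _) _)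
  rw [ENNReal.ofReal_le_ofReal_iff (Real.rpow_nonneg hIp _)] at hmono
  -- hmono : (∫ ‖f‖^q)^(q⁻¹) ≤ (∫ ‖f‖^p)^(p⁻¹)
  have key : ∫ ω, ‖f ω‖ ^ q ∂μ ≤ (∫ ω, ‖f ω‖ ^ p ∂μ) ^ (q / p) := by
    have e1 : ∫ ω, ‖f ω‖ ^ q ∂μ = ((∫ ω, ‖f ω‖ ^ q ∂μ) ^ q⁻¹) ^ q := by
      rw [← Real.rpow_mul hIq]
      rw [inv_mul_cancel₀ (ne_of_gt hq0), Real.rpow_one]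
    have e2 : ((∫ ω, ‖f ω‖ ^ p ∂μ) ^ p⁻¹) ^ q = (∫ ω, ‖f ω‖ ^ p ∂μ) ^ (q / p) := by
      rw [← Real.rpow_mul hIp]
      congr 1
      field_simp
    rw [e1, ← e2]
    exact Real.rpow_le_rpow (Real.rpow_nonneg hIq _) hmono hq
  simpa [Real.norm_eq_abs] using key

end lyap

section step

lemma MZ.step {Ω : Type} [MeasurableSpace Ω] (μ : Measure Ω) [IsProbabilityMeasure μ]
    {p : ℝ} (hp : 2 ≤ p) {S Y : Ω → ℝ} (hSm : Measurable S) (hYm : Measurable Y)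
    (hS : MemLp S (ENNReal.ofReal p) μ) (hY : MemLp Y (ENNReal.ofReal p) μ)
    (hind : IndepFun S Y μ) (hY0 : ∫ ω, Y ω ∂μ = 0) :
    ∫ ω, |S ω + Y ω| ^ p ∂μ ≤ ∫ ω, |S ω| ^ p ∂μ
      + p * (p - 1) * 4 ^ (p - 2) *
        ((∫ ω, |S ω| ^ p ∂μ) ^ ((p - 2) / p) * (∫ ω, |Y ω| ^ p ∂μ) ^ (2 / p)
          + ∫ ω, |Y ω| ^ p ∂μ) := by
  have hp0 : (0:ℝ) < p := by linarith
  have hp2 : (0:ℝ) ≤ p - 2 := by linarith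
  have hpne : (ENNReal.ofReal p) ≠ 0 := by simp [ENNReal.ofReal_eq_zero, not_le, hp0]
  have htp : (ENNReal.ofReal p).toReal = p := ENNReal.toReal_ofReal hp0.le
  set D : ℝ := p * (p - 1) * 4 ^ (p - 2) with hD
  have hD0 : 0 ≤ D := by
    have h4 : (0:ℝ) ≤ 4 ^ (p - 2) := Real.rpow_nonneg (by norm_num) _
    have h1 : (0:ℝ) ≤ p * (p - 1) := by nlinarith
    rw [hD]
    exact mul_nonneg h1 h4
  -- measurability
  have mSp2 : Measurable fun ω => |S ω| ^ (p - 2) := (MZ.cont_abs_rpow hp2).measurable.comp hSm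
  have mSp : Measurable fun ω => |S ω| ^ p := (MZ.cont_abs_rpow hp0.le).measurable.comp hSm
  have mYp : Measurable fun ω => |Y ω| ^ p := (MZ.cont_abs_rpow hp0.le).measurable.comp hYm
  have mY2 : Measurable fun ω => |Y ω| ^ (2:ℝ) :=
    (MZ.cont_abs_rpow (by norm_num : (0:ℝ) ≤ 2)).measurable.comp hYm
  have mphiS : Measurable fun ω => |S ω| ^ (p - 2) * S ω := mSp2.mul hSm
  -- integrability of p-th powers
  have iSp : Integrable (fun ω => |S ω| ^ p) μ := by
    have := hS.integrable_norm_rpow hpne ENNReal.ofReal_ne_top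
    simpa [Real.norm_eq_abs, htp] using this
  have iYp : Integrable (fun ω => |Y ω| ^ p) μ := by
    have := hY.integrable_norm_rpow hpne ENNReal.ofReal_ne_top
    simpa [Real.norm_eq_abs, htp] using this
  have iSYp : Integrable (fun ω => |S ω + Y ω| ^ p) μ := by
    have := (hS.add hY).integrable_norm_rpow hpne ENNReal.ofReal_ne_top
    simpa [Real.norm_eq_abs, htp] using this
  -- integrability of lower powers via domination
  have iSp2 : Integrable (fun ω => |S ω| ^ (p - 2)) μ := by
    refine Integrable.mono' ((integrable_const (1:ℝ)).add iSp) mSp2.aestronglyMeasurable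
      (Filter.Eventually.of_forall fun ω => ?_)
    simp only [Pi.add_apply]
    rw [Real.norm_eq_abs, abs_of_nonneg (Real.rpow_nonneg (abs_nonneg _) _)]
    exact MZ.rpow_le_one_add_rpow (abs_nonneg _) hp2 (by linarith)
  have iY2 : Integrable (fun ω => |Y ω| ^ (2:ℝ)) μ := by
    refine Integrable.mono' ((integrable_const (1:ℝ)).add iYp) mY2.aestronglyMeasurable
      (Filter.Eventually.of_forall fun ω => ?_)
    simp only [Pi.add_apply]
    rw [Real.norm_eq_abs, abs_of_nonneg (Real.rpow_nonneg (abs_nonneg _) _)]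
    exact MZ.rpow_le_one_add_rpow (abs_nonneg _) (by norm_num) hp
  have iphiS : Integrable (fun ω => |S ω| ^ (p - 2) * S ω) μ := by
    refine Integrable.mono' ((integrable_const (1:ℝ)).add iSp) mphiS.aestronglyMeasurable
      (Filter.Eventually.of_forall fun ω => ?_)
    simp only [Pi.add_apply]
    rw [Real.norm_eq_abs, abs_mul, abs_of_nonneg (Real.rpow_nonneg (abs_nonneg _) _),
      MZ.rpow_sub_two_mul_self hp (abs_nonneg _)]
    exact MZ.rpow_le_one_add_rpow (abs_nonneg _) (by linarith) (by linarith)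
  have iY1 : Integrable Y μ := hY.integrable (by
    rw [show (1:ℝ≥0∞) = ENNReal.ofReal 1 by simp]
    exact ENNReal.ofReal_le_ofReal (by linarith))
  -- Young-type domination for products
  have young : ∀ (x y w₁ w₂ : ℝ), 0 ≤ x → 0 ≤ y → 0 ≤ w₁ → 0 ≤ w₂ → w₁ + w₂ = 1 →
      (x ^ p) ^ w₁ * (y ^ p) ^ w₂ ≤ w₁ * x ^ p + w₂ * y ^ p := fun x y w₁ w₂ hx hy h1 h2 h3 =>
    Real.geom_mean_le_arith_mean2_weighted h1 h2 (Real.rpow_nonneg hx p)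
      (Real.rpow_nonneg hy p) h3
  have iprod1 : Integrable (fun ω => (|S ω| ^ (p - 2) * S ω) * Y ω) μ := by
    refine Integrable.mono' ((iSp.const_mul ((p-1)/p)).add (iYp.const_mul (1/p)))
      (mphiS.mul hYm).aestronglyMeasurable (Filter.Eventually.of_forall fun ω => ?_)
    have e1 : ‖(|S ω| ^ (p - 2) * S ω) * Y ω‖ = |S ω| ^ (p - 1) * |Y ω| := by
      rw [Real.norm_eq_abs, abs_mul, abs_mul, abs_of_nonneg (Real.rpow_nonneg (abs_nonneg _) _),
        MZ.rpow_sub_two_mul_self hp (abs_nonneg _)]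
    rw [e1]
    simp only [Pi.add_apply]
    have h := young |S ω| |Y ω| ((p-1)/p) (1/p) (abs_nonneg _) (abs_nonneg _)
      (div_nonneg (by linarith) hp0.le) (div_nonneg (by norm_num) hp0.le) (by field_simp; ring)
    have e2 : (|S ω| ^ p) ^ ((p-1)/p) = |S ω| ^ (p - 1) := by
      rw [← Real.rpow_mul (abs_nonneg _)]
      congr 1; field_simp
    have e3 : (|Y ω| ^ p) ^ ((1:ℝ)/p) = |Y ω| := by
      rw [← Real.rpow_mul (abs_nonneg _)]
      rw [mul_one_div, div_self (ne_of_gt hp0), Real.rpow_one]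
    rw [e2, e3] at h
    linarith
  have iprod2 : Integrable (fun ω => |S ω| ^ (p - 2) * |Y ω| ^ (2:ℝ)) μ := by
    refine Integrable.mono' ((iSp.const_mul ((p-2)/p)).add (iYp.const_mul (2/p)))
      (mSp2.mul mY2).aestronglyMeasurable (Filter.Eventually.of_forall fun ω => ?_)
    have e1 : ‖|S ω| ^ (p - 2) * |Y ω| ^ (2:ℝ)‖ = |S ω| ^ (p - 2) * |Y ω| ^ (2:ℝ) := by
      rw [Real.norm_eq_abs, abs_of_nonneg]
      positivity
    rw [e1]
    simp only [Pi.add_apply]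
    have h := young |S ω| |Y ω| ((p-2)/p) (2/p) (abs_nonneg _) (abs_nonneg _)
      (div_nonneg (by linarith) hp0.le) (div_nonneg (by norm_num) hp0.le) (by field_simp; ring)
    have e2 : (|S ω| ^ p) ^ ((p-2)/p) = |S ω| ^ (p - 2) := by
      rw [← Real.rpow_mul (abs_nonneg _)]
      congr 1; field_simp
    have e3 : (|Y ω| ^ p) ^ ((2:ℝ)/p) = |Y ω| ^ (2:ℝ) := by
      rw [← Real.rpow_mul (abs_nonneg _)]
      congr 1; field_simp
    rw [e2, e3] at h
    linarith
  -- pointwise inequality and integral_mono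
  have i2 : Integrable (fun ω => p * (|S ω| ^ (p - 2) * S ω) * Y ω) μ := by
    have := iprod1.const_mul p
    refine this.congr (Filter.Eventually.of_forall fun ω => ?_)
    ring
  have i3 : Integrable (fun ω => D * (|S ω| ^ (p - 2) * |Y ω| ^ (2:ℝ) + |Y ω| ^ p)) μ := by
    have := (iprod2.add iYp).const_mul D
    exact this.congr (Filter.Eventually.of_forall fun ω => rfl)
  have i12 : Integrable (fun ω => |S ω| ^ p + p * (|S ω| ^ (p - 2) * S ω) * Y ω) μ :=
    (iSp.add i2).congr (Filter.Eventually.of_forall fun ω => rfl)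
  have iRHS : Integrable (fun ω => |S ω| ^ p + p * (|S ω| ^ (p - 2) * S ω) * Y ω
      + D * (|S ω| ^ (p - 2) * |Y ω| ^ (2:ℝ) + |Y ω| ^ p)) μ :=
    (i12.add i3).congr (Filter.Eventually.of_forall fun ω => rfl)
  have hmono : ∫ ω, |S ω + Y ω| ^ p ∂μ ≤
      ∫ ω, (|S ω| ^ p + p * (|S ω| ^ (p - 2) * S ω) * Y ω
        + D * (|S ω| ^ (p - 2) * |Y ω| ^ (2:ℝ) + |Y ω| ^ p)) ∂μ :=
    integral_mono iSYp iRHS (fun ω => MZ.lemA hp (S ω) (Y ω))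
  have hsplit : ∫ ω, (|S ω| ^ p + p * (|S ω| ^ (p - 2) * S ω) * Y ω
        + D * (|S ω| ^ (p - 2) * |Y ω| ^ (2:ℝ) + |Y ω| ^ p)) ∂μ
      = ∫ ω, |S ω| ^ p ∂μ + p * ∫ ω, (|S ω| ^ (p - 2) * S ω) * Y ω ∂μ
        + D * ∫ ω, (|S ω| ^ (p - 2) * |Y ω| ^ (2:ℝ) + |Y ω| ^ p) ∂μ := by
    rw [integral_add i12 i3, integral_add iSp i2, integral_const_mul D]
    have e : ∫ ω, p * (|S ω| ^ (p - 2) * S ω) * Y ω ∂μ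
        = p * ∫ ω, (|S ω| ^ (p - 2) * S ω) * Y ω ∂μ := by
      rw [← integral_const_mul p]
      congr 1
      funext ω
      ring
    rw [e]
  -- the cross term vanishes
  have hcross : ∫ ω, (|S ω| ^ (p - 2) * S ω) * Y ω ∂μ = 0 := by
    have mphi : Measurable fun x : ℝ => |x| ^ (p - 2) * x :=
      (MZ.cont_abs_rpow hp2).measurable.mul measurable_id
    have hind2 : IndepFun (fun ω => |S ω| ^ (p - 2) * S ω) Y μ :=
      hind.comp mphi measurable_id
    have := hind2.integral_mul_eq_mul_integral mphiS.aestronglyMeasurable hYm.aestronglyMeasurable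
    have e : ∫ ω, (|S ω| ^ (p - 2) * S ω) * Y ω ∂μ
        = (∫ ω, |S ω| ^ (p - 2) * S ω ∂μ) * ∫ ω, Y ω ∂μ := by
      simpa [Pi.mul_apply] using this
    rw [e, hY0, mul_zero]
  -- the product term factorizes
  have hfact : ∫ ω, |S ω| ^ (p - 2) * |Y ω| ^ (2:ℝ) ∂μ
      = (∫ ω, |S ω| ^ (p - 2) ∂μ) * ∫ ω, |Y ω| ^ (2:ℝ) ∂μ := by
    have hind3 : IndepFun (fun ω => |S ω| ^ (p - 2)) (fun ω => |Y ω| ^ (2:ℝ)) μ :=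
      hind.comp (MZ.cont_abs_rpow hp2).measurable
        (MZ.cont_abs_rpow (by norm_num : (0:ℝ) ≤ 2)).measurable
    have := hind3.integral_mul_eq_mul_integral mSp2.aestronglyMeasurable mY2.aestronglyMeasurable
    simpa [Pi.mul_apply] using this
  -- Lyapunov bounds
  have hlyapS : ∫ ω, |S ω| ^ (p - 2) ∂μ ≤ (∫ ω, |S ω| ^ p ∂μ) ^ ((p - 2) / p) :=
    MZ.lyap hp2 (by linarith) hp0 hS
  have hlyapY : ∫ ω, |Y ω| ^ (2:ℝ) ∂μ ≤ (∫ ω, |Y ω| ^ p ∂μ) ^ ((2:ℝ) / p) :=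
    MZ.lyap (by norm_num) hp (by linarith) hY
  -- assemble
  have hsplit2 : ∫ ω, (|S ω| ^ (p - 2) * |Y ω| ^ (2:ℝ) + |Y ω| ^ p) ∂μ
      = (∫ ω, |S ω| ^ (p - 2) ∂μ) * (∫ ω, |Y ω| ^ (2:ℝ) ∂μ) + ∫ ω, |Y ω| ^ p ∂μ := by
    rw [integral_add iprod2 iYp, hfact]
  have hprod_le : (∫ ω, |S ω| ^ (p - 2) ∂μ) * (∫ ω, |Y ω| ^ (2:ℝ) ∂μ)
      ≤ (∫ ω, |S ω| ^ p ∂μ) ^ ((p - 2) / p) * (∫ ω, |Y ω| ^ p ∂μ) ^ (2 / p) := by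
    have h1 : (0:ℝ) ≤ ∫ ω, |S ω| ^ (p - 2) ∂μ :=
      integral_nonneg fun ω => Real.rpow_nonneg (abs_nonneg _) _
    have h2 : (0:ℝ) ≤ ∫ ω, |Y ω| ^ (2:ℝ) ∂μ :=
      integral_nonneg fun ω => Real.rpow_nonneg (abs_nonneg _) _
    have h3 : (0:ℝ) ≤ (∫ ω, |S ω| ^ p ∂μ) ^ ((p - 2) / p) :=
      Real.rpow_nonneg (integral_nonneg fun ω => Real.rpow_nonneg (abs_nonneg _) _) _
    exact mul_le_mul hlyapS hlyapY h2 h3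
  rw [hsplit, hcross, mul_zero, add_zero] at hmono
  rw [hsplit2] at hmono
  refine le_trans hmono ?_
  have := hprod_le
  nlinarith [hD0]

end step

section numeric

lemma MZ.numeric {p D K b a : ℝ} (hp : 2 ≤ p) (hD0 : 0 < D) (hK1 : 1 ≤ K)
    (hDK : D ≤ K / 2) (hDKt : D * K ^ ((p - 2) / p) ≤ K / 2)
    (hb : 0 < b) (k : ℕ) (ha0 : 0 ≤ a)
    (hIH : a ≤ K * (k : ℝ) ^ (p / 2) * b) :
    a + D * (a ^ ((p - 2) / p) * b ^ (2 / p) + b) ≤ K * ((k : ℝ) + 1) ^ (p / 2) * b := by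
  have hp0 : (0:ℝ) < p := by linarith
  have hK0 : (0:ℝ) < K := by linarith
  have hκ0 : (0:ℝ) ≤ (k:ℝ) := Nat.cast_nonneg k
  have hθ0 : (0:ℝ) ≤ (p - 2) / p := div_nonneg (by linarith) hp0.le
  have hKθ0 : (0:ℝ) ≤ K ^ ((p - 2) / p) := Real.rpow_nonneg hK0.le _
  -- bound the middle term
  have hmid : a ^ ((p - 2) / p) * b ^ (2 / p)
      ≤ K ^ ((p - 2) / p) * (k : ℝ) ^ ((p - 2) / 2) * b := by
    have h1 : a ^ ((p - 2) / p) ≤ (K * (k : ℝ) ^ (p / 2) * b) ^ ((p - 2) / p) :=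
      Real.rpow_le_rpow ha0 hIH hθ0
    have h2 : (K * (k : ℝ) ^ (p / 2) * b) ^ ((p - 2) / p)
        = K ^ ((p - 2) / p) * ((k : ℝ) ^ (p / 2)) ^ ((p - 2) / p) * b ^ ((p - 2) / p) := by
      rw [Real.mul_rpow (mul_nonneg hK0.le (Real.rpow_nonneg hκ0 _)) hb.le,
        Real.mul_rpow hK0.le (Real.rpow_nonneg hκ0 _)]
    have h3 : ((k : ℝ) ^ (p / 2)) ^ ((p - 2) / p) = (k : ℝ) ^ ((p - 2) / 2) := by
      rw [← Real.rpow_mul hκ0]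
      congr 1
      field_simp
    have h4 : b ^ ((p - 2) / p) * b ^ (2 / p) = b := by
      rw [← Real.rpow_add hb]
      have : (p - 2) / p + 2 / p = 1 := by field_simp; ring
      rw [this, Real.rpow_one]
    have hb2 : (0:ℝ) ≤ b ^ (2 / p) := Real.rpow_nonneg hb.le _
    calc a ^ ((p - 2) / p) * b ^ (2 / p)
        ≤ (K * (k : ℝ) ^ (p / 2) * b) ^ ((p - 2) / p) * b ^ (2 / p) :=
          mul_le_mul_of_nonneg_right h1 hb2
      _ = K ^ ((p - 2) / p) * (k : ℝ) ^ ((p - 2) / 2) * (b ^ ((p - 2) / p) * b ^ (2 / p)) := by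
          rw [h2, h3]; ring
      _ = K ^ ((p - 2) / p) * (k : ℝ) ^ ((p - 2) / 2) * b := by rw [h4]
  -- coefficient inequality
  have hcoef : K * (k : ℝ) ^ (p / 2) + D * (K ^ ((p - 2) / p) * (k : ℝ) ^ ((p - 2) / 2)) + D
      ≤ K * ((k : ℝ) + 1) ^ (p / 2) := by
    rcases Nat.eq_zero_or_pos k with rfl | hk1
    · simp only [Nat.cast_zero]
      rw [Real.zero_rpow (by positivity : p / 2 ≠ 0), zero_add,
        Real.one_rpow]
      have h01 : (0:ℝ) ^ ((p - 2) / 2) ≤ 1 := Real.zero_rpow_le_one _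
      have h0n : (0:ℝ) ≤ (0:ℝ) ^ ((p - 2) / 2) := Real.rpow_nonneg le_rfl _
      nlinarith [mul_nonneg hD0.le hKθ0]
    · have hκ1 : (1:ℝ) ≤ (k:ℝ) := by exact_mod_cast hk1
      have hκpos : (0:ℝ) < (k:ℝ) := by linarith
      set q : ℝ := p / 2 with hq
      have hq1 : (1:ℝ) ≤ q := by rw [hq]; linarith
      -- Bernoulli
      have hbern : 1 + q * (1 / (k:ℝ)) ≤ (1 + 1 / (k:ℝ)) ^ q :=
        one_add_mul_self_le_rpow_one_add
          (le_trans (by norm_num : (-1:ℝ) ≤ 0) (by positivity)) hq1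
      have hmulk : (k:ℝ) ^ q * (1 + 1 / (k:ℝ)) ^ q = ((k:ℝ) + 1) ^ q := by
        rw [← Real.mul_rpow hκ0 (by positivity)]
        congr 1
        field_simp
      have hpow : (k:ℝ) ^ q * (1 + q * (1 / (k:ℝ))) = (k:ℝ) ^ q + q * (k:ℝ) ^ (q - 1) := by
        rw [Real.rpow_sub hκpos, Real.rpow_one]
        field_simp
      have hgain : (k:ℝ) ^ q + q * (k:ℝ) ^ (q - 1) ≤ ((k:ℝ) + 1) ^ q := by
        rw [← hmulk, ← hpow]
        exact mul_le_mul_of_nonneg_left hbern (Real.rpow_nonneg hκ0 _)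
      have hκq1 : (1:ℝ) ≤ (k:ℝ) ^ (q - 1) := Real.one_le_rpow hκ1 (by linarith)
      have hκq1' : (0:ℝ) ≤ (k:ℝ) ^ (q - 1) := by linarith
      have heq : (p - 2) / 2 = q - 1 := by rw [hq]; ring
      rw [heq]
      -- enough: D*K^θ*κ^{q-1} + D ≤ K*(q κ^{q-1})
      have hDKθκ : D * (K ^ ((p - 2) / p) * (k:ℝ) ^ (q - 1)) ≤ K / 2 * (k:ℝ) ^ (q - 1) := by
        have := mul_le_mul_of_nonneg_right hDKt hκq1'
        calc D * (K ^ ((p - 2) / p) * (k:ℝ) ^ (q - 1))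
            = D * K ^ ((p - 2) / p) * (k:ℝ) ^ (q - 1) := by ring
          _ ≤ K / 2 * (k:ℝ) ^ (q - 1) := this
      have hfin : K / 2 * (k:ℝ) ^ (q - 1) + D ≤ K * (q * (k:ℝ) ^ (q - 1)) := by
        nlinarith [mul_le_mul_of_nonneg_left hκq1 hK0.le, hκq1']
      have := mul_le_mul_of_nonneg_left hgain hK0.le
      nlinarith [hDKθκ, hfin]
  -- combine
  have hDm : D * (a ^ ((p - 2) / p) * b ^ (2 / p) + b)
      ≤ D * (K ^ ((p - 2) / p) * (k : ℝ) ^ ((p - 2) / 2) * b + b) := by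
    have := mul_le_mul_of_nonneg_left (add_le_add_right hmid b) hD0.le
    linarith
  have := mul_le_mul_of_nonneg_right hcoef hb.le
  nlinarith [hDm, hIH]

end numeric


/-- **Marcinkiewicz–Zygmund inequality for i.i.d. averages.**  For every real `p ≥ 2` there is a
constant `C_p > 0`, depending only on `p`, such that for every `n ≥ 1` and every i.i.d. sequence
`X_1, …, X_n` of real random variables with `E[X_1] = 0` and `E[|X_1|^p] < ∞`, one has
`E[|(1/n) Σ_i X_i|^p] ≤ C_p E[|X_1|^p] / n^(p/2)`. -/
theorem mz_iid_average (p : ℝ) (hp : 2 ≤ p) :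
    ∃ C : ℝ, 0 < C ∧
      ∀ (Ω : Type) (_ : MeasurableSpace Ω) (μ : Measure Ω), IsProbabilityMeasure μ →
        ∀ (n : ℕ) (hn : 1 ≤ n),
          ∀ (X : Fin n → Ω → ℝ), (∀ i, Measurable (X i)) →
            iIndepFun X μ →
            (∀ i j, IdentDistrib (X i) (X j) μ μ) →
            (∀ i, ∫ ω, X i ω ∂μ = 0) →
            (∀ i, MemLp (X i) (ENNReal.ofReal p) μ) →
            ∫ ω, |(↑n)⁻¹ * ∑ i, X i ω| ^ p ∂μ ≤
              C * (∫ ω, |X ⟨0, hn⟩ ω| ^ p ∂μ) / (n : ℝ) ^ (p / 2) := by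
  have hp0 : (0:ℝ) < p := by linarith
  have hp1 : (1:ℝ) < p := by linarith
  have hp2 : (0:ℝ) ≤ p - 2 := by linarith
  set D : ℝ := p * (p - 1) * 4 ^ (p - 2) with hDdef
  have hD0 : 0 < D := by
    have h4 : (0:ℝ) < 4 ^ (p - 2) := Real.rpow_pos_of_pos (by norm_num) _
    have h1 : (0:ℝ) < p * (p - 1) := by nlinarith
    exact mul_pos h1 h4
  set K : ℝ := (2 * D + 2) ^ p with hKdef
  have hbase1 : (1:ℝ) ≤ 2 * D + 2 := by linarith
  have hK1 : (1:ℝ) ≤ K := Real.one_le_rpow hbase1 hp0.le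
  have hK0 : (0:ℝ) < K := by linarith
  have hKge : 2 * D + 2 ≤ K := by
    have := Real.rpow_le_rpow_of_exponent_le hbase1 (by linarith : (1:ℝ) ≤ p)
    rwa [Real.rpow_one] at this
  have hDK : D ≤ K / 2 := by linarith
  have hK2p : 2 * D ≤ K ^ (2 / p) := by
    have h1 : K ^ (2 / p) = (2 * D + 2) ^ (p * (2 / p)) := by
      rw [Real.rpow_mul (by linarith : (0:ℝ) ≤ 2 * D + 2), ← hKdef]
    have h2 : p * (2 / p) = 2 := by field_simp
    rw [h1, h2]
    have h3 : (2 * D + 2) ^ (2:ℝ) = (2 * D + 2) * (2 * D + 2) := by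
      rw [show ((2:ℝ)) = ((2:ℕ):ℝ) from by norm_num, Real.rpow_natCast]
      push_cast
      ring
    rw [h3]
    nlinarith
  have hDKt : D * K ^ ((p - 2) / p) ≤ K / 2 := by
    have hmul : K ^ ((p - 2) / p) * K ^ (2 / p) = K := by
      rw [← Real.rpow_add hK0]
      have : (p - 2) / p + 2 / p = 1 := by field_simp; ring
      rw [this, Real.rpow_one]
    have hKθ0 : (0:ℝ) ≤ K ^ ((p - 2) / p) := Real.rpow_nonneg hK0.le _
    nlinarith [mul_le_mul_of_nonneg_left hK2p hKθ0]
  refine ⟨K, hK0, ?_⟩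
  intro Ω mΩ μ hμ n hn X hmeas hindep hident hzero hmem
  haveI := hμ
  have hnpos : (0:ℝ) < (n:ℝ) := by exact_mod_cast hn
  have hnp2 : (0:ℝ) < (n:ℝ) ^ (p / 2) := Real.rpow_pos_of_pos hnpos _
  set b : ℝ := ∫ ω, |X ⟨0, hn⟩ ω| ^ p ∂μ with hbdef
  have hb0 : 0 ≤ b := integral_nonneg fun ω => Real.rpow_nonneg (abs_nonneg _) _
  have habs_meas : Measurable fun x : ℝ => |x| ^ p := (MZ.cont_abs_rpow hp0.le).measurable
  have hbi : ∀ i, ∫ ω, |X i ω| ^ p ∂μ = b := by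
    intro i
    rw [hbdef]
    exact ((hident i ⟨0, hn⟩).comp habs_meas).integral_eq
  have hpne : (ENNReal.ofReal p) ≠ 0 := by simp [ENNReal.ofReal_eq_zero, not_le, hp0]
  have htp : (ENNReal.ofReal p).toReal = p := ENNReal.toReal_ofReal hp0.le
  have iXp : ∀ i, Integrable (fun ω => |X i ω| ^ p) μ := by
    intro i
    have := (hmem i).integrable_norm_rpow hpne ENNReal.ofReal_ne_top
    simpa [Real.norm_eq_abs, htp] using this
  rcases eq_or_lt_of_le hb0 with hb | hbpos
  · -- degenerate case : b = 0
    have hXae : ∀ i : Fin n, X i =ᵐ[μ] 0 := by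
      intro i
      have h0 : ∫ ω, |X i ω| ^ p ∂μ = 0 := by rw [hbi i, ← hb]
      have := (integral_eq_zero_iff_of_nonneg
        (fun ω => Real.rpow_nonneg (abs_nonneg _) _) (iXp i)).mp h0
      filter_upwards [this] with ω hω
      have : |X i ω| ^ p = 0 := hω
      rw [Real.rpow_eq_zero_iff_of_nonneg (abs_nonneg _)] at this
      simpa [abs_eq_zero] using this.1
    have hsum : (fun ω => |((n:ℝ))⁻¹ * ∑ i, X i ω| ^ p) =ᵐ[μ] 0 := by
      have hall : ∀ᵐ ω ∂μ, ∀ i : Fin n, X i ω = 0 := (ae_all_iff).mpr hXae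
      filter_upwards [hall] with ω hω
      simp [Finset.sum_eq_zero (fun i _ => hω i), Real.zero_rpow hp0.ne']
    rw [integral_congr_ae hsum]
    simp [← hb]
  · -- main case : b > 0
    set S : ℕ → Ω → ℝ :=
      fun k => ∑ i ∈ Finset.univ.filter (fun i : Fin n => (i : ℕ) < k), X i with hSdef
    have hSapply : ∀ k ω, S k ω
        = ∑ i ∈ Finset.univ.filter (fun i : Fin n => (i : ℕ) < k), X i ω := by
      intro k ω
      rw [hSdef]
      simp [Finset.sum_apply]
    have hSmeas : ∀ k, Measurable (S k) := by
      intro k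
      have : S k = fun ω => ∑ i ∈ Finset.univ.filter (fun i : Fin n => (i : ℕ) < k), X i ω := by
        funext ω; exact hSapply k ω
      rw [this]
      exact Finset.measurable_sum _ fun i _ => hmeas i
    have hSmem : ∀ k, MemLp (S k) (ENNReal.ofReal p) μ := by
      intro k
      have : S k = fun ω => ∑ i ∈ Finset.univ.filter (fun i : Fin n => (i : ℕ) < k), X i ω := by
        funext ω; exact hSapply k ω
      rw [this]
      exact memLp_finsetSum _ fun i _ => hmem i
    have claim : ∀ k, k ≤ n → ∫ ω, |S k ω| ^ p ∂μ ≤ K * (k : ℝ) ^ (p / 2) * b := by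
      intro k
      induction k with
      | zero =>
        intro _
        have h0 : ∀ ω, S 0 ω = 0 := by
          intro ω
          rw [hSapply]
          simp
        have : ∫ ω, |S 0 ω| ^ p ∂μ = 0 := by
          have : (fun ω => |S 0 ω| ^ p) = fun _ => (0:ℝ) := by
            funext ω
            rw [h0 ω, abs_zero, Real.zero_rpow hp0.ne']
          rw [this, integral_zero]
        rw [this]
        simp only [Nat.cast_zero]
        rw [Real.zero_rpow (by positivity : p / 2 ≠ 0)]
        simp
      | succ k ih =>
        intro hk1
        have hk : k < n := hk1
        have ihk := ih (Nat.le_of_succ_le hk1)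
        set i0 : Fin n := ⟨k, hk⟩ with hi0
        have hnotmem : i0 ∉ Finset.univ.filter (fun i : Fin n => (i : ℕ) < k) := by
          simp [hi0]
        have hfilter : Finset.univ.filter (fun i : Fin n => (i : ℕ) < k + 1)
            = insert i0 (Finset.univ.filter (fun i : Fin n => (i : ℕ) < k)) := by
          ext i
          simp only [Finset.mem_filter, Finset.mem_univ, true_and, Finset.mem_insert]
          constructor
          · intro h
            rcases Nat.lt_succ_iff_lt_or_eq.mp h with h | h
            · exact Or.inr h
            · exact Or.inl (Fin.ext h)
          · intro h
            rcases h with h | h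
            · rw [h]; exact Nat.lt_succ_self k
            · exact Nat.lt_succ_of_lt h
        have hSsucc : ∀ ω, S (k + 1) ω = S k ω + X i0 ω := by
          intro ω
          rw [hSapply, hSapply, hfilter, Finset.sum_insert hnotmem]
          ring
        have hindSk : IndepFun (S k) (X i0) μ :=
          hindep.indepFun_finsetSum_of_notMem hmeas hnotmem
        have hstep := MZ.step μ hp (hSmeas k) (hmeas i0) (hSmem k) (hmem i0)
          hindSk (hzero i0)
        have hrw : ∫ ω, |S (k + 1) ω| ^ p ∂μ = ∫ ω, |S k ω + X i0 ω| ^ p ∂μ := by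
          congr 1
          funext ω
          rw [hSsucc ω]
        rw [hrw, hbi i0] at *
        have ha0 : (0:ℝ) ≤ ∫ ω, |S k ω| ^ p ∂μ :=
          integral_nonneg fun ω => Real.rpow_nonneg (abs_nonneg _) _
        have hnum := MZ.numeric hp hD0 hK1 hDK hDKt hbpos k ha0 ihk
        push_cast
        calc ∫ ω, |S k ω + X i0 ω| ^ p ∂μ
            ≤ ∫ ω, |S k ω| ^ p ∂μ + D * ((∫ ω, |S k ω| ^ p ∂μ) ^ ((p - 2) / p) * b ^ (2 / p)
              + b) := hstep
          _ ≤ K * ((k:ℝ) + 1) ^ (p / 2) * b := hnum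
    -- conclude
    have hfin := claim n le_rfl
    have hSn : ∀ ω, S n ω = ∑ i, X i ω := by
      intro ω
      rw [hSapply]
      congr 1
      apply Finset.filter_true_of_mem
      intro i _
      exact i.isLt
    have hLHS : ∫ ω, |((n:ℝ))⁻¹ * ∑ i, X i ω| ^ p ∂μ
        = ((n:ℝ) ^ p)⁻¹ * ∫ ω, |S n ω| ^ p ∂μ := by
      rw [← integral_const_mul]
      congr 1
      funext ω
      rw [hSn ω, abs_mul, Real.mul_rpow (abs_nonneg _) (abs_nonneg _),
        abs_of_nonneg (inv_nonneg.mpr hnpos.le), Real.inv_rpow hnpos.le]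
    rw [hLHS]
    have hmono := mul_le_mul_of_nonneg_left hfin
      (inv_nonneg.mpr (Real.rpow_nonneg hnpos.le p))
    refine le_trans hmono (le_of_eq ?_)
    have hnsplit : (n:ℝ) ^ p = (n:ℝ) ^ (p / 2) * (n:ℝ) ^ (p / 2) := by
      rw [← Real.rpow_add hnpos]
      congr 1
      ring
    rw [hnsplit]
    field_simp
end

section
/- Let a ∈ ℝ and let (a_n)_{n≥0} be real coefficients. Let μ ∈ ℝ, let (H_j)_{j≥1} be i.i.d. integrable real random variables with E[H_1] = μ, and let Ñ be a random variable on the nonnegative integers with P(Ñ = n) = q_n > 0 for all n, independent of (H_j). Suppose Σ_{n=0}^∞ |a_n| (E[|H_1 − a|])^n < ∞. Then the estimator (a_Ñ / q_Ñ) · ∏_{j=1}^{Ñ} (H_j − a) is integrable and its expectation equals Σ_{n=0}^∞ a_n (μ − a)^n; in particular, if g(x) = Σ_{n=0}^∞ a_n (x − a)^n with this series converging at x = μ, the estimator is unbiased for g(μ). -/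
open MeasureTheory ProbabilityTheory
open scoped BigOperators

lemma aux_prod_spec {Ω : Type*} [MeasurableSpace Ω] (μ : Measure Ω) [IsProbabilityMeasure μ]
    {X : ℕ → Ω → ℝ} (hm : ∀ j, Measurable (X j))
    (hind : iIndepFun X μ) (hint : ∀ j, Integrable (X j) μ) :
    ∀ n : ℕ, Integrable (fun ω => ∏ j ∈ Finset.range n, X j ω) μ ∧
      ∫ ω, ∏ j ∈ Finset.range n, X j ω ∂μ = ∏ j ∈ Finset.range n, ∫ ω, X j ω ∂μ := by
  intro n
  induction n with
  | zero => simp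
  | succ n ih =>
    have hIf : IndepFun (∏ j ∈ Finset.range n, X j) (X n) μ :=
      hind.indepFun_prod_range_succ hm n
    have heq : (∏ j ∈ Finset.range n, X j) = fun ω => ∏ j ∈ Finset.range n, X j ω := by
      funext ω; simp [Finset.prod_apply]
    rw [heq] at hIf
    have hintP : Integrable (fun ω => (∏ j ∈ Finset.range n, X j ω) * X n ω) μ :=
      hIf.integrable_mul ih.1 (hint n)
    constructor
    · simpa [Finset.prod_range_succ] using hintP
    · have := hIf.integral_mul_eq_mul_integral ih.1.aestronglyMeasurable (hint n).aestronglyMeasurable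
      simp only [Finset.prod_range_succ]
      calc ∫ ω, (∏ j ∈ Finset.range n, X j ω) * X n ω ∂μ
          = (∫ ω, ∏ j ∈ Finset.range n, X j ω ∂μ) * ∫ ω, X n ω ∂μ := this
        _ = (∏ j ∈ Finset.range n, ∫ ω, X j ω ∂μ) * ∫ ω, X n ω ∂μ := by rw [ih.2]


/-- **Unbiased power-series (Poisson-type) estimator.**  Let `g(x) = Σ_n coef_n (x − a)^n`,
let `(H_j)_{j≥1}` be i.i.d. integrable with mean `μ₀`, and let `Nt` be a random level with
`P(Nt = n) = q_n > 0`, independent of `(H_j)`.  If `Σ_n |coef_n| (E[|H_1 − a|])^n < ∞`, then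
the estimator `(coef_Nt / q_Nt) Π_{j=1}^{Nt} (H_j − a)` is integrable with expectation
`Σ_n coef_n (μ₀ − a)^n`, i.e. it is unbiased for `g(μ₀)`.
(Here `H 0` plays the role of `H_1`.) -/
theorem power_series_unbiased
    {Ω : Type*} [MeasurableSpace Ω] (μ : Measure Ω) [IsProbabilityMeasure μ]
    (a : ℝ) (coef : ℕ → ℝ)
    (H : ℕ → Ω → ℝ) (hHmeas : ∀ j, Measurable (H j))
    (hindep : iIndepFun H μ)
    (hident : ∀ j, IdentDistrib (H j) (H 0) μ μ)
    (hHint : Integrable (H 0) μ)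
    (μ₀ : ℝ) (hμ₀ : μ₀ = ∫ ω, H 0 ω ∂μ)
    (q : ℕ → ℝ) (hq : ∀ n, 0 < q n)
    (Nt : Ω → ℕ) (hNtmeas : Measurable Nt)
    (hNtlaw : ∀ n : ℕ, μ {ω | Nt ω = n} = ENNReal.ofReal (q n))
    (hNtindep : IndepFun Nt (fun ω => fun j => H j ω) μ)
    (hsum : Summable fun n : ℕ => |coef n| * (∫ ω, |H 0 ω - a| ∂μ) ^ n) :
    Integrable (fun ω => coef (Nt ω) / q (Nt ω) * ∏ j ∈ Finset.range (Nt ω), (H j ω - a)) μ ∧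
    ∫ ω, coef (Nt ω) / q (Nt ω) * ∏ j ∈ Finset.range (Nt ω), (H j ω - a) ∂μ =
      ∑' n : ℕ, coef n * (μ₀ - a) ^ n := by
  set M : ℝ := ∫ ω, |H 0 ω - a| ∂μ with hM
  have hM0 : 0 ≤ M := integral_nonneg fun ω => abs_nonneg _
  -- the centered family
  have hintj : ∀ j, Integrable (H j) μ := fun j => (hident j).integrable_iff.mpr hHint
  have hXm : ∀ j, Measurable (fun ω => H j ω - a) := fun j => (hHmeas j).sub measurable_const
  have hXind : iIndepFun (fun j ω => H j ω - a) μ := by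
    have := hindep.comp (fun _ x => x - a) (fun _ => measurable_id.sub measurable_const)
    exact this
  have hXint : ∀ j, Integrable (fun ω => H j ω - a) μ :=
    fun j => (hintj j).sub (integrable_const a)
  have hXval : ∀ j, ∫ ω, (H j ω - a) ∂μ = μ₀ - a := by
    intro j
    rw [integral_sub (hintj j) (integrable_const a), integral_const]
    simp [hμ₀, (hident j).integral_eq]
  -- the abs family
  have hAm : ∀ j, Measurable (fun ω => |H j ω - a|) := fun j => (hXm j).abs
  have hAind : iIndepFun (fun j ω => |H j ω - a|) μ := by
    have := hindep.comp (fun _ x => |x - a|)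
      (fun _ => (measurable_id.sub measurable_const).abs)
    exact this
  have hAint : ∀ j, Integrable (fun ω => |H j ω - a|) μ := fun j => (hXint j).abs
  have hAval : ∀ j, ∫ ω, |H j ω - a| ∂μ = M := by
    intro j
    have : IdentDistrib (fun ω => |H j ω - a|) (fun ω => |H 0 ω - a|) μ μ :=
      (hident j).comp ((measurable_id.sub measurable_const).abs)
    exact this.integral_eq
  -- products
  have hP := aux_prod_spec μ hXm hXind hXint
  have hA := aux_prod_spec μ hAm hAind hAint
  have hPval : ∀ n, ∫ ω, ∏ j ∈ Finset.range n, (H j ω - a) ∂μ = (μ₀ - a) ^ n := by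
    intro n
    rw [(hP n).2]
    simp [hXval]
  have hAvaln : ∀ n, ∫ ω, ∏ j ∈ Finset.range n, |H j ω - a| ∂μ = M ^ n := by
    intro n
    rw [(hA n).2]
    simp [hAval]
  -- the indicator functions
  set φ : ℕ → ℕ → ℝ := fun n k => if k = n then 1 else 0 with hφ
  have hφmeas : ∀ n, Measurable (φ n) := fun n => measurable_of_countable _
  have hφind : ∀ n, (fun ω => φ n (Nt ω)) = (Nt ⁻¹' {n}).indicator (fun _ => (1:ℝ)) := by
    intro n; funext ω
    by_cases h : Nt ω = n <;> simp [hφ, h, Set.indicator]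
  have hφint : ∀ n, Integrable (fun ω => φ n (Nt ω)) μ := by
    intro n
    rw [hφind n]
    exact (integrable_const (1:ℝ)).indicator (hNtmeas (measurableSet_singleton n))
  have hpre : ∀ n, Nt ⁻¹' {n} = {ω | Nt ω = n} := fun n => rfl
  have hφval : ∀ n, ∫ ω, φ n (Nt ω) ∂μ = q n := by
    intro n
    rw [hφind n, integral_indicator (hNtmeas (measurableSet_singleton n)),
      setIntegral_const, hpre, measureReal_def, hNtlaw n, ENNReal.toReal_ofReal (hq n).le, smul_eq_mul, mul_one]
  -- the vector of H's
  set V : Ω → (ℕ → ℝ) := fun ω j => H j ω with hV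
  have hVmeas : Measurable V := measurable_pi_lambda _ hHmeas
  -- independence of indicator and product
  have hψmeas : ∀ n, Measurable (fun v : ℕ → ℝ => ∏ j ∈ Finset.range n, (v j - a)) := by
    intro n
    exact Finset.measurable_prod _ fun j _ => (measurable_pi_apply j).sub measurable_const
  have hψameas : ∀ n, Measurable (fun v : ℕ → ℝ => ∏ j ∈ Finset.range n, |v j - a|) := by
    intro n
    exact Finset.measurable_prod _ fun j _ => ((measurable_pi_apply j).sub measurable_const).abs
  have hIndP : ∀ n, IndepFun (fun ω => φ n (Nt ω))
      (fun ω => ∏ j ∈ Finset.range n, (H j ω - a)) μ := by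
    intro n
    have := hNtindep.comp (hφmeas n) (hψmeas n)
    exact this
  have hIndA : ∀ n, IndepFun (fun ω => φ n (Nt ω))
      (fun ω => ∏ j ∈ Finset.range n, |H j ω - a|) μ := by
    intro n
    have := hNtindep.comp (hφmeas n) (hψameas n)
    exact this
  -- the pieces g n
  set g : ℕ → Ω → ℝ :=
    fun n ω => φ n (Nt ω) * (coef n / q n * ∏ j ∈ Finset.range n, (H j ω - a)) with hg
  have hgint : ∀ n, Integrable (g n) μ := by
    intro n
    have h1 : Integrable (fun ω => φ n (Nt ω) * ∏ j ∈ Finset.range n, (H j ω - a)) μ :=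
      (hIndP n).integrable_mul (hφint n) (hP n).1
    have h2 := h1.const_mul (coef n / q n)
    exact h2.congr (Filter.Eventually.of_forall fun ω => by simp [hg]; ring)
  have hgval : ∀ n, ∫ ω, g n ω ∂μ = coef n * (μ₀ - a) ^ n := by
    intro n
    have h1 : ∫ ω, φ n (Nt ω) * ∏ j ∈ Finset.range n, (H j ω - a) ∂μ
        = q n * (μ₀ - a) ^ n := by
      show integral μ ((fun ω => φ n (Nt ω)) * fun ω => ∏ j ∈ Finset.range n, (H j ω - a))
        = q n * (μ₀ - a) ^ n
      rw [(hIndP n).integral_mul_eq_mul_integral (hφint n).aestronglyMeasurable (hP n).1.aestronglyMeasurable, hφval n, hPval n]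
    calc ∫ ω, g n ω ∂μ
        = ∫ ω, (coef n / q n) * (φ n (Nt ω) * ∏ j ∈ Finset.range n, (H j ω - a)) ∂μ := by
          congr 1; funext ω; simp [hg]; ring
      _ = (coef n / q n) * (q n * (μ₀ - a) ^ n) := by rw [integral_const_mul, h1]
      _ = coef n * (μ₀ - a) ^ n := by
          rw [mul_comm (q n) ((μ₀ - a) ^ n), ← mul_assoc, mul_right_comm,
            div_mul_cancel₀ _ (hq n).ne']
  -- absolute values of the pieces
  have hgabs : ∀ n ω, |g n ω| =
      (|coef n| / q n) * (φ n (Nt ω) * ∏ j ∈ Finset.range n, |H j ω - a|) := by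
    intro n ω
    have hφ01 : φ n (Nt ω) = 0 ∨ φ n (Nt ω) = 1 := by
      by_cases h : Nt ω = n <;> simp [hφ, h]
    rcases hφ01 with h | h <;>
      simp [hg, h, abs_mul, abs_div, abs_of_pos (hq n), Finset.abs_prod]
  have hgabsint : ∀ n, ∫ ω, |g n ω| ∂μ = |coef n| * M ^ n := by
    intro n
    have h1 : ∫ ω, φ n (Nt ω) * ∏ j ∈ Finset.range n, |H j ω - a| ∂μ = q n * M ^ n := by
      show integral μ ((fun ω => φ n (Nt ω)) * fun ω => ∏ j ∈ Finset.range n, |H j ω - a|)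
        = q n * M ^ n
      rw [(hIndA n).integral_mul_eq_mul_integral (hφint n).aestronglyMeasurable (hA n).1.aestronglyMeasurable, hφval n, hAvaln n]
    calc ∫ ω, |g n ω| ∂μ
        = ∫ ω, (|coef n| / q n) * (φ n (Nt ω) * ∏ j ∈ Finset.range n, |H j ω - a|) ∂μ := by
          congr 1; funext ω; exact hgabs n ω
      _ = (|coef n| / q n) * (q n * M ^ n) := by rw [integral_const_mul, h1]
      _ = |coef n| * M ^ n := by
          rw [mul_comm (q n) (M ^ n), ← mul_assoc, mul_right_comm,
            div_mul_cancel₀ _ (hq n).ne']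
  -- lintegrals of the norms
  have hglint : ∀ n, ∫⁻ ω, (‖g n ω‖₊ : ENNReal) ∂μ = ENNReal.ofReal (|coef n| * M ^ n) := by
    intro n
    have hnn : ∀ ω : Ω, (‖g n ω‖₊ : ENNReal) = ENNReal.ofReal |g n ω| := fun ω => by
      rw [← enorm_eq_nnnorm, ← ofReal_norm, Real.norm_eq_abs]
    simp_rw [hnn]
    rw [← ofReal_integral_eq_lintegral_ofReal (hgint n).abs
      (Filter.Eventually.of_forall fun ω => abs_nonneg _), hgabsint n]
  -- summability of the lintegrals
  have hlsum : ∑' n, ∫⁻ ω, (‖g n ω‖₊ : ENNReal) ∂μ ≠ ⊤ := by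
    simp_rw [hglint]
    rw [← ENNReal.ofReal_tsum_of_nonneg
      (fun n => mul_nonneg (abs_nonneg _) (pow_nonneg hM0 n)) hsum]
    exact ENNReal.ofReal_ne_top
  -- pointwise identity
  set f : Ω → ℝ :=
    fun ω => coef (Nt ω) / q (Nt ω) * ∏ j ∈ Finset.range (Nt ω), (H j ω - a) with hf
  have hpt : ∀ ω, f ω = ∑' n, g n ω := by
    intro ω
    rw [tsum_eq_single (Nt ω) (fun m hm => by simp [hg, hφ, Ne.symm hm])]
    simp [hg, hφ, hf]
  have hfmeas : Measurable f := by
    have hF : Measurable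
        (fun p : Ω × ℕ => coef p.2 / q p.2 * ∏ j ∈ Finset.range p.2, (H j p.1 - a)) :=
      measurable_from_prod_countable_left fun n => by
        show Measurable fun x : Ω => coef n / q n * ∏ j ∈ Finset.range n, (H j x - a)
        exact measurable_const.mul
          (Finset.measurable_prod _ fun j _ => (hHmeas j).sub measurable_const)
    exact hF.comp (measurable_id.prodMk hNtmeas)
  have hfin : HasFiniteIntegral f μ := by
    have hnn : ∀ ω, (‖f ω‖₊ : ENNReal) = ∑' n, (‖g n ω‖₊ : ENNReal) := by
      intro ω
      rw [tsum_eq_single (Nt ω) (fun m hm => by simp [hg, hφ, Ne.symm hm])]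
      congr 1
      simp [hg, hφ, hf]
    rw [HasFiniteIntegral]
    calc ∫⁻ ω, (‖f ω‖₊ : ENNReal) ∂μ
        = ∫⁻ ω, ∑' n, (‖g n ω‖₊ : ENNReal) ∂μ := by simp_rw [hnn]
      _ = ∑' n, ∫⁻ ω, (‖g n ω‖₊ : ENNReal) ∂μ :=
          lintegral_tsum fun n => (hgint n).aestronglyMeasurable.aemeasurable.enorm
      _ < ⊤ := lt_top_iff_ne_top.2 hlsum
  have hfint : Integrable f μ := ⟨hfmeas.aestronglyMeasurable, hfin⟩
  refine ⟨hfint, ?_⟩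
  calc ∫ ω, f ω ∂μ
      = ∫ ω, ∑' n, g n ω ∂μ := by congr 1; funext ω; exact hpt ω
    _ = ∑' n, ∫ ω, g n ω ∂μ :=
        integral_tsum (fun n => (hgint n).aestronglyMeasurable) hlsum
    _ = ∑' n, coef n * (μ₀ - a) ^ n := by simp_rw [hgval]
end
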